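/- Let A and B be n×n complex Hermitian matrices, C = A + B, and let α, β, γ : {1, …, n} → ℝ be the eigenvalues of A, B, C respectively, counted with multiplicity. Suppose there exists an n×n Hermitian matrix Z with ZA = AZ and ZB = BZ that is not a real scalar multiple of the identity. Then there exist nonempty proper subsets I, J, K ⊆ {1, …, n} with |I| = |J| = |K| such that Σ_{k∈K} γ_k = Σ_{i∈I} α_i + Σ_{j∈J} β_j. (This is the matrix-theoretic core of the singular-locus Proposition: non-analyticities of the Horn density occur only on such hyperplanes.) -/

import Mathlib

open Matrix Polynomial Finset

private lemma exists_sub_multiset_map {α β : Type*} [DecidableEq α] [DecidableEq β] (f : α → β) :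
    ∀ (t : Multiset β) (m : Multiset α), t ≤ m.map f → ∃ m' ≤ m, m'.map f = t := by
  intro t
  induction t using Multiset.induction with
  | empty => exact fun m _ => ⟨0, Multiset.zero_le m, Multiset.map_zero f⟩
  | cons b t ih =>
    intro m h
    have hb : b ∈ m.map f := Multiset.mem_of_le h (Multiset.mem_cons_self b t)
    obtain ⟨a, ha, rfl⟩ := Multiset.mem_map.mp hb
    have hm : m.map f = f a ::ₘ (m.erase a).map f := by
      conv_lhs => rw [← Multiset.cons_erase ha]
      rw [Multiset.map_cons]
    have ht : t ≤ (m.erase a).map f := by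
      have h2 := Multiset.erase_le_erase (f a) h
      rwa [Multiset.erase_cons_head, hm, Multiset.erase_cons_head] at h2
    obtain ⟨m', hle, hmap⟩ := ih (m.erase a) ht
    refine ⟨a ::ₘ m', ?_, by rw [Multiset.map_cons, hmap]⟩
    calc a ::ₘ m' ≤ a ::ₘ m.erase a := Multiset.cons_le_cons a hle
      _ = m := Multiset.cons_erase ha

private lemma charpoly_conj_aux {n : ℕ} (A V W : Matrix (Fin n) (Fin n) ℂ)
    (hVW : V * W = 1) : (V * A * W).charpoly = A.charpoly := by
  have hmap : V.map (C : ℂ →+* ℂ[X]) * W.map (C : ℂ →+* ℂ[X]) = 1 := by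
    rw [← Matrix.map_mul, hVW, Matrix.map_one _ (map_zero _) (map_one _)]
  have key : charmatrix (V * A * W) = V.map C * charmatrix A * W.map C := by
    rw [charmatrix, charmatrix, Matrix.mul_sub, Matrix.sub_mul]
    congr 1
    · have hs : (scalar (Fin n)) (X : ℂ[X]) = (X : ℂ[X]) • 1 := by
        rw [smul_one_eq_diagonal]; rfl
      rw [hs, mul_smul_comm, mul_one, smul_mul_assoc, hmap]
    · simp only [RingHom.mapMatrix_apply, Matrix.map_mul]
  have hdet : (V.map (C : ℂ →+* ℂ[X])).det * (W.map (C : ℂ →+* ℂ[X])).det = 1 := by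
    rw [← det_mul, hmap, det_one]
  rw [Matrix.charpoly, Matrix.charpoly, key, det_mul, det_mul]
  calc (V.map (C : ℂ →+* ℂ[X])).det * (charmatrix A).det * (W.map (C : ℂ →+* ℂ[X])).det
      = (V.map (C : ℂ →+* ℂ[X])).det * (W.map (C : ℂ →+* ℂ[X])).det * (charmatrix A).det := by ring
    _ = (charmatrix A).det := by rw [hdet, one_mul]

private lemma exists_finset_of_dvd {n : ℕ} (f : Fin n → ℂ) (p : ℂ[X]) (hp : p.Monic)
    (hdvd : p ∣ ∏ i : Fin n, (X - C (f i))) :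
    ∃ I : Finset (Fin n), I.card = p.natDegree ∧ p.roots.sum = ∑ i ∈ I, f i := by
  have hq : (∏ i : Fin n, (X - C (f i))) ≠ 0 :=
    (monic_prod_of_monic _ _ fun i _ => monic_X_sub_C (f i)).ne_zero
  have hqroots : (∏ i : Fin n, (X - C (f i))).roots = Finset.univ.val.map f := by
    have h1 : (∏ i : Fin n, (X - C (f i)))
        = ((Finset.univ.val.map f).map fun a => X - C a).prod := by
      rw [Multiset.map_map, Finset.prod_eq_multiset_prod]
      rfl
    rw [h1, roots_multiset_prod_X_sub_C]
  have hle : p.roots ≤ Finset.univ.val.map f := by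
    rw [← hqroots]; exact roots.le_of_dvd hq hdvd
  obtain ⟨m', hm'le, hm'map⟩ := exists_sub_multiset_map f p.roots Finset.univ.val hle
  have hnodup : m'.Nodup := Multiset.nodup_of_le hm'le Finset.univ.nodup
  refine ⟨⟨m', hnodup⟩, ?_, ?_⟩
  · have hsplit : p.Splits := IsAlgClosed.splits p
    have hcard : p.roots.card = p.natDegree := (splits_iff_card_roots.mp hsplit)
    calc (⟨m', hnodup⟩ : Finset (Fin n)).card = m'.card := rfl
      _ = (m'.map f).card := (Multiset.card_map f m').symm
      _ = p.roots.card := by rw [hm'map]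
      _ = p.natDegree := hcard
  · rw [← hm'map]
    exact (Finset.sum_eq_multiset_sum ⟨m', hnodup⟩ f).symm

private lemma block_trace_eq_sum {n : ℕ} (M : Matrix (Fin n) (Fin n) ℂ) (b : Fin n → Bool)
    (hbt : M.BlockTriangular b) (f : Fin n → ℂ)
    (hM : M.charpoly = ∏ i : Fin n, (X - C (f i)))
    (hne : ∃ i, b i = true) :
    ∃ I : Finset (Fin n), I.card = Fintype.card {i // b i = true} ∧
      (M.toSquareBlock b true).trace = ∑ i ∈ I, f i := by
  obtain ⟨i₀, hi₀⟩ := hne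
  set p := (M.toSquareBlock b true).charpoly with hp
  have hmono : p.Monic := (M.toSquareBlock b true).charpoly_monic
  have hdvd : p ∣ M.charpoly := by
    rw [hbt.charpoly]
    exact Finset.dvd_prod_of_mem _ (Finset.mem_image.mpr ⟨i₀, Finset.mem_univ _, hi₀⟩)
  rw [hM] at hdvd
  obtain ⟨I, hcard, hsum⟩ := exists_finset_of_dvd f p hmono hdvd
  haveI hnonempty : Nonempty {i // b i = true} := ⟨⟨i₀, hi₀⟩⟩
  have hcardtype : Fintype.card {i // b i = true} = p.natDegree :=
    (charpoly_natDegree_eq_dim (M.toSquareBlock b true)).symm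
  have hposdeg : 0 < p.natDegree := by
    rw [← hcardtype]; exact Fintype.card_pos
  have hsplit : p.Splits := IsAlgClosed.splits p
  have htr : (M.toSquareBlock b true).trace
      = -p.coeff (Fintype.card {i // b i = true} - 1) :=
    trace_eq_neg_charpoly_coeff _
  rw [hcardtype, ← nextCoeff_of_natDegree_pos hposdeg,
    hsplit.nextCoeff_eq_neg_sum_roots_of_monic hmono, neg_neg, hsum] at htr
  exact ⟨I, hcard.trans hcardtype.symm, htr⟩

private lemma conj_mul_conj {n : ℕ} (U X Y : Matrix (Fin n) (Fin n) ℂ)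
    (hU : U * star U = 1) :
    (star U * X * U) * (star U * Y * U) = star U * (X * Y) * U := by
  calc (star U * X * U) * (star U * Y * U)
      = star U * (X * ((U * star U) * (Y * U))) := by simp only [Matrix.mul_assoc]
    _ = star U * (X * Y) * U := by rw [hU, Matrix.one_mul, Matrix.mul_assoc, Matrix.mul_assoc]

/-- Let `A, B` be `n×n` complex Hermitian matrices, `C = A + B`, with eigenvalues
`α, β, γ` counted with multiplicity (expressed via factorizations of the characteristic
polynomials). If some Hermitian `Z` commutes with both `A` and `B` and is not a real scalar
multiple of the identity, then there are nonempty proper subsets `I, J, K ⊆ {1, …, n}` of equal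
cardinality with `Σ_{k∈K} γ_k = Σ_{i∈I} α_i + Σ_{j∈J} β_j`. -/
theorem horn_singular_hyperplane (n : ℕ) (A B : Matrix (Fin n) (Fin n) ℂ)
    (hA : A.IsHermitian) (hB : B.IsHermitian)
    (α β γ : Fin n → ℝ)
    (hα : A.charpoly = ∏ i : Fin n, (X - Polynomial.C ((α i : ℂ))))
    (hβ : B.charpoly = ∏ i : Fin n, (X - Polynomial.C ((β i : ℂ))))
    (hγ : (A + B).charpoly = ∏ i : Fin n, (X - Polynomial.C ((γ i : ℂ))))
    (hZ : ∃ Z : Matrix (Fin n) (Fin n) ℂ, Z.IsHermitian ∧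
      Z * A = A * Z ∧ Z * B = B * Z ∧ ∀ c : ℝ, Z ≠ (c : ℂ) • (1 : Matrix (Fin n) (Fin n) ℂ)) :
    ∃ I J K : Finset (Fin n),
      I.Nonempty ∧ J.Nonempty ∧ K.Nonempty ∧
      I ≠ Finset.univ ∧ J ≠ Finset.univ ∧ K ≠ Finset.univ ∧
      I.card = J.card ∧ J.card = K.card ∧
      ∑ k ∈ K, γ k = ∑ i ∈ I, α i + ∑ j ∈ J, β j := by
  obtain ⟨Z, hZh, hZA, hZB, hZne⟩ := hZ
  rcases Nat.eq_zero_or_pos n with hn | hn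
  · subst hn
    exact absurd (Subsingleton.elim Z _) (hZne 0)
  set U : Matrix (Fin n) (Fin n) ℂ := (hZh.eigenvectorUnitary : Matrix (Fin n) (Fin n) ℂ)
    with hUdef
  have hU1 : U * star U = 1 := mem_unitaryGroup_iff.mp (hZh.eigenvectorUnitary).2
  have hU2 : star U * U = 1 := mem_unitaryGroup_iff'.mp (hZh.eigenvectorUnitary).2
  set d : Fin n → ℝ := hZh.eigenvalues with hddef
  have hdiag : star U * Z * U = diagonal (RCLike.ofReal ∘ d) :=
    by have h := hZh.conjStarAlgAut_star_eigenvectorUnitary; rw [Unitary.conjStarAlgAut_star_apply] at h; exact h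
  -- eigenvalues of Z are not all equal
  have hex : ∃ i j : Fin n, d i ≠ d j := by
    by_contra hcon
    push_neg at hcon
    refine hZne (d ⟨0, hn⟩) ?_
    have h1 : diagonal (RCLike.ofReal ∘ d : Fin n → ℂ) = ((d ⟨0, hn⟩ : ℝ) : ℂ) • 1 := by
      have h0 : (RCLike.ofReal ∘ d : Fin n → ℂ) = fun _ => ((d ⟨0, hn⟩ : ℝ) : ℂ) := by
        funext i
        show (RCLike.ofReal (d i) : ℂ) = ((d ⟨0, hn⟩ : ℝ) : ℂ)
        rw [hcon i ⟨0, hn⟩]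
        rfl
      rw [h0, smul_one_eq_diagonal]
    calc Z = U * diagonal (RCLike.ofReal ∘ d) * star U := hZh.spectral_theorem
      _ = ((d ⟨0, hn⟩ : ℝ) : ℂ) • (U * star U) := by
          rw [h1, mul_smul_comm, mul_one, smul_mul_assoc]
      _ = ((d ⟨0, hn⟩ : ℝ) : ℂ) • 1 := by rw [hU1]
  obtain ⟨i₀, j₀, hij₀⟩ := hex
  set b : Fin n → Bool := fun i => decide (d i = d i₀) with hbdef
  set A' := star U * A * U with hA'def
  set B' := star U * B * U with hB'def
  -- commutation with the diagonal matrix gives the zero pattern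
  have hzero : ∀ (M : Matrix (Fin n) (Fin n) ℂ), Z * M = M * Z →
      ∀ i j, d i ≠ d j → (star U * M * U) i j = 0 := by
    intro M hcomm i j hij
    have hDM : diagonal (RCLike.ofReal ∘ d : Fin n → ℂ) * (star U * M * U)
        = (star U * M * U) * diagonal (RCLike.ofReal ∘ d) := by
      rw [← hdiag, conj_mul_conj U Z M hU1, conj_mul_conj U M Z hU1, hcomm]
    have hentry := congrFun (congrFun hDM i) j
    rw [Matrix.diagonal_mul, Matrix.mul_diagonal] at hentry
    by_contra hx
    apply hij
    have : (RCLike.ofReal ∘ d : Fin n → ℂ) i = (RCLike.ofReal ∘ d : Fin n → ℂ) j := by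
      apply mul_right_cancel₀ hx
      rw [hentry, mul_comm]
    simp only [Function.comp_apply] at this
    exact_mod_cast this
  have hbtmk : ∀ (M : Matrix (Fin n) (Fin n) ℂ), (∀ i j, d i ≠ d j → M i j = 0) →
      M.BlockTriangular b := by
    intro M hz i j hlt
    obtain ⟨hbj, hbi⟩ := Bool.lt_iff.mp hlt
    apply hz
    have h1 : d i = d i₀ := of_decide_eq_true hbi
    have h2 : ¬ (d j = d i₀) := of_decide_eq_false hbj
    rw [h1]
    exact fun hc => h2 hc.symm
  have hbtA : A'.BlockTriangular b := hbtmk A' (hzero A hZA)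
  have hbtB : B'.BlockTriangular b := hbtmk B' (hzero B hZB)
  have hC' : A' + B' = star U * (A + B) * U := by
    rw [hA'def, hB'def, Matrix.mul_add, Matrix.add_mul]
  have hbtC : (A' + B').BlockTriangular b := by
    rw [hC']
    exact hbtmk _ (hzero (A + B) (by rw [Matrix.mul_add, Matrix.add_mul, hZA, hZB]))
  -- charpolys
  have hcpA : A'.charpoly = ∏ i : Fin n, (X - C ((α i : ℂ))) := by
    rw [hA'def, charpoly_conj_aux A (star U) U hU2, hα]
  have hcpB : B'.charpoly = ∏ i : Fin n, (X - C ((β i : ℂ))) := by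
    rw [hB'def, charpoly_conj_aux B (star U) U hU2, hβ]
  have hcpC : (A' + B').charpoly = ∏ i : Fin n, (X - C ((γ i : ℂ))) := by
    rw [hC', charpoly_conj_aux (A + B) (star U) U hU2, hγ]
  have hnetrue : ∃ i, b i = true := ⟨i₀, decide_eq_true rfl⟩
  obtain ⟨I, hIcard, hItr⟩ := block_trace_eq_sum A' b hbtA _ hcpA hnetrue
  obtain ⟨J, hJcard, hJtr⟩ := block_trace_eq_sum B' b hbtB _ hcpB hnetrue
  obtain ⟨K, hKcard, hKtr⟩ := block_trace_eq_sum (A' + B') b hbtC _ hcpC hnetrue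
  -- trace additivity on the block
  have htradd : ((A' + B').toSquareBlock b true).trace
      = (A'.toSquareBlock b true).trace + (B'.toSquareBlock b true).trace := by
    simp [Matrix.trace, Matrix.diag, Matrix.toSquareBlock_def, Matrix.add_apply,
      Finset.sum_add_distrib]
  -- the block is nonempty and proper
  have hrpos : 0 < Fintype.card {i // b i = true} :=
    Fintype.card_pos_iff.mpr ⟨⟨i₀, decide_eq_true rfl⟩⟩
  have hrlt : Fintype.card {i // b i = true} < n := by
    rw [Fintype.card_subtype]
    have hsub : Finset.univ.filter (fun i => b i = true) ⊂ Finset.univ := by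
      refine Finset.ssubset_iff_of_subset (Finset.filter_subset _ _) |>.mpr ?_
      refine ⟨j₀, Finset.mem_univ _, ?_⟩
      simp only [Finset.mem_filter, Finset.mem_univ, true_and, hbdef, decide_eq_true_eq]
      exact fun hc => hij₀ hc.symm
    have := Finset.card_lt_card hsub
    simpa using this
  set r := Fintype.card {i // b i = true}
  have hne_of : ∀ S : Finset (Fin n), S.card = r → S.Nonempty ∧ S ≠ Finset.univ := by
    intro S hS
    constructor
    · exact Finset.card_pos.mp (hS ▸ hrpos)
    · intro huniv
      rw [huniv, Finset.card_univ, Fintype.card_fin] at hS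
      omega
  obtain ⟨hIne, hIuniv⟩ := hne_of I hIcard
  obtain ⟨hJne, hJuniv⟩ := hne_of J hJcard
  obtain ⟨hKne, hKuniv⟩ := hne_of K hKcard
  refine ⟨I, J, K, hIne, hJne, hKne, hIuniv, hJuniv, hKuniv,
    hIcard.trans hJcard.symm, hJcard.trans hKcard.symm, ?_⟩
  have hc : ((∑ k ∈ K, γ k : ℝ) : ℂ) = ((∑ i ∈ I, α i + ∑ j ∈ J, β j : ℝ) : ℂ) := by
    push_cast
    rw [← hItr, ← hJtr, ← hKtr, htradd]
  exact_mod_cast hc
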